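/- The transformation r5 of the quantum degenerate Garnier system G(2,3) is a quantum canonical transformation: suppose x1 is a unit of R, and define q1 = x1^{-1}, p1 = −x1^2y1 − x1x2y2 − (1 + α1 − α2 + 2α3)·x1 + (1/2)x1^{-1}, q2 = x2x1^{-1}, p2 = x1y2 − 1/2. Then (q1, p1, q2, p2) again satisfy the canonical commutation relations: [q1,p1] = [q2,p2] = h and [q1,q2] = [p1,p2] = [q1,p2] = [q2,p1] = 0. -/
import Mathlib

private lemma swap_mul' {R : Type*} [Ring R] {a b : R} (hab : a * b = b * a) (t : R) :
    a * (b * t) = b * (a * t) := by rw [← mul_assoc, hab, mul_assoc]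

private lemma swap_ccr' {R : Type*} [Ring R] {a b k : R} (hab : a * b = b * a + k) (t : R) :
    a * (b * t) = b * (a * t) + k * t := by rw [← mul_assoc, hab, add_mul, mul_assoc]

private lemma cancel_l' {R : Type*} [Ring R] {a b : R} (hab : a * b = 1) (t : R) :
    a * (b * t) = t := by rw [← mul_assoc, hab, one_mul]

/-- The transformation r5 of the quantum degenerate Garnier system G(2,3) is a
quantum canonical transformation. -/
theorem quantum_garnier_G23_r5_canonical
    {R : Type*} [Ring R] [Algebra ℚ R]
    (h α1 α2 α3 : R)
    (hh : ∀ r : R, h * r = r * h)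
    (hA1 : ∀ r : R, α1 * r = r * α1)
    (hA2 : ∀ r : R, α2 * r = r * α2)
    (hA3 : ∀ r : R, α3 * r = r * α3)
    (x1 y1 x2 y2 : R)
    (hx1y1 : x1 * y1 - y1 * x1 = h)
    (hx2y2 : x2 * y2 - y2 * x2 = h)
    (hx1x2 : x1 * x2 - x2 * x1 = 0)
    (hy1y2 : y1 * y2 - y2 * y1 = 0)
    (hx1y2 : x1 * y2 - y2 * x1 = 0)
    (hx2y1 : x2 * y1 - y1 * x2 = 0)
    (x1i : R) (hx1il : x1i * x1 = 1) (hx1ir : x1 * x1i = 1)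
    (q1 p1 q2 p2 : R)
    (hq1 : q1 = x1i)
    (hp1 : p1 = -(x1^2 * y1) - x1 * x2 * y2 - (1 + α1 - α2 + 2 * α3) * x1
      + ((1 : ℚ)/2) • x1i)
    (hq2 : q2 = x2 * x1i)
    (hp2 : p2 = x1 * y2 - ((1 : ℚ)/2) • (1 : R)) :
    q1 * p1 - p1 * q1 = h ∧ q2 * p2 - p2 * q2 = h ∧
    q1 * q2 - q2 * q1 = 0 ∧ p1 * p2 - p2 * p1 = 0 ∧
    q1 * p2 - p2 * q1 = 0 ∧ q2 * p1 - p1 * q2 = 0 := by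
  -- the scalar 1/2 as a central element c
  set c : R := ((1 : ℚ)/2) • (1 : R) with hc
  have hcC : ∀ r : R, c * r = r * c := fun r => by
    rw [hc, smul_mul_assoc, one_mul, mul_smul_comm, mul_one]
  have hcx1i : ((1 : ℚ)/2) • x1i = c * x1i := by
    rw [hc, smul_mul_assoc, one_mul]
  rw [hcx1i] at hp1
  -- the central combination A
  set A : R := 1 + α1 - α2 + 2 * α3 with hAdef
  have hAC : ∀ r : R, A * r = r * A := fun r => by
    have h3 : (2 * α3) * r = r * (2 * α3) := by
      rw [two_mul, add_mul, hA3, mul_add]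
    rw [hAdef]
    rw [add_mul, sub_mul, add_mul, one_mul, hA1, hA2, h3,
        mul_add, mul_sub, mul_add, mul_one]
  -- basic reordering rules, bare forms
  have e11 : y1 * x1 = x1 * y1 + (-h) := by rw [← hx1y1]; abel
  have e22 : y2 * x2 = x2 * y2 + (-h) := by rw [← hx2y2]; abel
  have e21 : x2 * x1 = x1 * x2 := (sub_eq_zero.mp hx1x2).symm
  have eyy : y2 * y1 = y1 * y2 := (sub_eq_zero.mp hy1y2).symm
  have ey2x1 : y2 * x1 = x1 * y2 := (sub_eq_zero.mp hx1y2).symm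
  have ey1x2 : y1 * x2 = x2 * y1 := (sub_eq_zero.mp hx2y1).symm
  -- x1i commutation rules
  have ex2i : x2 * x1i = x1i * x2 := by
    calc x2 * x1i = x1i * x1 * x2 * x1i := by rw [hx1il, one_mul]
    _ = x1i * (x2 * x1) * x1i := by rw [e21]; noncomm_ring
    _ = x1i * x2 * (x1 * x1i) := by noncomm_ring
    _ = x1i * x2 := by rw [hx1ir, mul_one]
  have ey2i : y2 * x1i = x1i * y2 := by
    calc y2 * x1i = x1i * x1 * y2 * x1i := by rw [hx1il, one_mul]
    _ = x1i * (y2 * x1) * x1i := by rw [ey2x1]; noncomm_ring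
    _ = x1i * y2 * (x1 * x1i) := by noncomm_ring
    _ = x1i * y2 := by rw [hx1ir, mul_one]
  have ey1i : y1 * x1i = x1i * y1 + (h * x1i) * x1i := by
    have e1 : x1 * y1 = y1 * x1 + h := by rw [← hx1y1]; abel
    have : x1i * (x1 * y1) * x1i = x1i * (y1 * x1 + h) * x1i := by rw [e1]
    have h2 : y1 * x1i = x1i * y1 * (x1 * x1i) + x1i * h * x1i := by
      calc y1 * x1i = x1i * x1 * y1 * x1i := by rw [hx1il, one_mul]
      _ = x1i * (x1 * y1) * x1i := by noncomm_ring
      _ = x1i * (y1 * x1 + h) * x1i := by rw [e1]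
      _ = x1i * y1 * (x1 * x1i) + x1i * h * x1i := by noncomm_ring
    rw [hx1ir, mul_one] at h2
    rw [h2, hh x1i]; try noncomm_ring
  refine ⟨?_, ?_, ?_, ?_, ?_, ?_⟩ <;>
  · simp only [hq1, hp1, hq2, hp2, pow_two, mul_add, add_mul, mul_sub, sub_mul, mul_neg, neg_mul,
      mul_one, one_mul, mul_assoc, neg_neg,
      -- reordering
      e11, swap_ccr' e11, e22, swap_ccr' e22,
      e21, swap_mul' e21, eyy, swap_mul' eyy,
      ey2x1, swap_mul' ey2x1, ey1x2, swap_mul' ey1x2,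
      ex2i, swap_mul' ex2i, ey2i, swap_mul' ey2i,
      ey1i, swap_ccr' ey1i,
      hx1il, cancel_l' hx1il, hx1ir, cancel_l' hx1ir,
      -- centrals to the left
      (hh x1).symm, swap_mul' (hh x1).symm,
      (hh x1i).symm, swap_mul' (hh x1i).symm,
      (hh x2).symm, swap_mul' (hh x2).symm,
      (hh y1).symm, swap_mul' (hh y1).symm,
      (hh y2).symm, swap_mul' (hh y2).symm,
      (hcC x1).symm, swap_mul' (hcC x1).symm,
      (hcC x1i).symm, swap_mul' (hcC x1i).symm,
      (hcC x2).symm, swap_mul' (hcC x2).symm,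
      (hcC y1).symm, swap_mul' (hcC y1).symm,
      (hcC y2).symm, swap_mul' (hcC y2).symm,
      (hAC x1).symm, swap_mul' (hAC x1).symm,
      (hAC x1i).symm, swap_mul' (hAC x1i).symm,
      (hAC x2).symm, swap_mul' (hAC x2).symm,
      (hAC y1).symm, swap_mul' (hAC y1).symm,
      (hAC y2).symm, swap_mul' (hAC y2).symm,
      (hAC c).symm, swap_mul' (hAC c).symm]
    try abel
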